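/- Let F ⊆ K be finite fields with q = |F| and n = [K : F]. Suppose η ∈ K is a normal element of K over F, and let δ₀, δ₁, …, δ_{n−1} ∈ K be the dual family of the normal basis, i.e. Tr_{K/F}(η^{q^i}·δ_j) = 1 if i = j and 0 if i ≠ j, for all 0 ≤ i, j < n. Then δ_j = δ₀^{q^j} for every 0 ≤ j < n; in particular the dual basis of a normal basis is again a normal basis, generated by δ₀. -/

import Mathlib

section aux

variable (F K : Type*) [Field F] [Fintype F] [Field K] [Fintype K] [Algebra F K]

/-- The Frobenius `x ↦ x ^ |F|` as an `F`-algebra equivalence of `K`. -/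
noncomputable def frobAlgEquiv : K ≃ₐ[F] K :=
  letI f : K →ₐ[F] K :=
    { toFun := fun x => x ^ Fintype.card F
      map_one' := one_pow _
      map_mul' := fun x y => mul_pow x y _
      map_zero' := zero_pow Fintype.card_pos.ne'
      map_add' := fun x y => by
        have hp : Fact (Nat.Prime (ringChar F)) := ⟨CharP.char_is_prime F _⟩
        haveI : CharP K (ringChar F) := charP_of_injective_algebraMap
          (algebraMap F K).injective (ringChar F)
        obtain ⟨m, hm, hcard⟩ := FiniteField.card F (ringChar F)
        rw [hcard]; exact add_pow_char_pow (x := x) (y := y) (ringChar F) m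
      commutes' := fun a => by
        show algebraMap F K a ^ Fintype.card F = algebraMap F K a
        rw [← map_pow, FiniteField.pow_card] }
  AlgEquiv.ofBijective f (Finite.injective_iff_bijective.mp f.toRingHom.injective)

theorem trace_pow_card' (x : K) :
    Algebra.trace F K (x ^ Fintype.card F) = Algebra.trace F K x :=
  Algebra.trace_eq_of_algEquiv (frobAlgEquiv F K) x

theorem trace_pow_card_pow (x : K) (m : ℕ) :
    Algebra.trace F K (x ^ Fintype.card F ^ m) = Algebra.trace F K x := by
  induction m with
  | zero => simp
  | succ m ih => rw [pow_succ, pow_mul, trace_pow_card', ih]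

omit [Field F] [Fintype K] [Algebra F K] in
variable {K} in
theorem pow_qpow_mod (n : ℕ) (hK : ∀ x : K, x ^ Fintype.card F ^ n = x) (x : K) (a : ℕ) :
    x ^ Fintype.card F ^ a = x ^ Fintype.card F ^ (a % n) := by
  set Q := Fintype.card F
  have h1 : ∀ (t : ℕ) (y : K), y ^ (Q ^ n) ^ t = y := by
    intro t
    induction t with
    | zero => simp
    | succ t ih => intro y; rw [pow_succ, pow_mul, ih, hK]
  conv_lhs => rw [← Nat.div_add_mod a n]
  rw [pow_add, pow_mul, pow_mul, h1]

end aux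

/-- The dual basis of a normal basis is again a normal basis: if `η` is normal over `F`
and `(δ_j)` is the dual family of the normal basis `(η^{q^i})`, then `δ_j = δ₀^{q^j}`
for all `j`. -/
theorem stmt11 (F K : Type*) [Field F] [Fintype F] [Field K] [Fintype K] [Algebra F K]
    (n : ℕ) (hn : Module.finrank F K = n) (η : K)
    (hη : LinearIndependent F (fun i : Fin n => η ^ Fintype.card F ^ (i : ℕ)) ∧
      Submodule.span F (Set.range fun i : Fin n => η ^ Fintype.card F ^ (i : ℕ)) = ⊤)
    (δ : Fin n → K)
    (hδ : ∀ i j : Fin n,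
      Algebra.trace F K (η ^ Fintype.card F ^ (i : ℕ) * δ j) = if i = j then 1 else 0) :
    ∀ j : Fin n, δ j = δ ⟨0, hn ▸ Module.finrank_pos⟩ ^ Fintype.card F ^ (j : ℕ) := by
  haveI : FiniteDimensional F K := Module.Finite.of_finite
  set q := Fintype.card F with hq
  have npos : 0 < n := hn ▸ Module.finrank_pos
  set z : Fin n := ⟨0, npos⟩ with hz
  have hK : ∀ x : K, x ^ q ^ n = x := by
    intro x
    rw [← hn, ← Module.card_eq_pow_finrank, FiniteField.pow_card]
  intro j
  -- the candidate dual element satisfies the same duality relations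
  have key : ∀ i : Fin n,
      Algebra.trace F K (η ^ q ^ (i : ℕ) * δ z ^ q ^ (j : ℕ)) = if i = j then 1 else 0 := by
    intro i
    set k : Fin n := ⟨(i + (n - j)) % n, Nat.mod_lt _ npos⟩ with hk
    have hkj : ((k : ℕ) + j) % n = (i : ℕ) := by
      have hjn : (j : ℕ) ≤ n := le_of_lt j.isLt
      have : ((i + (n - j)) % n + j) % n = ((i + (n - j)) + j) % n := by
        rw [Nat.mod_add_mod]
      rw [this]
      have h2 : (i : ℕ) + (n - j) + j = i + n := by omega
      rw [h2, Nat.add_mod_right, Nat.mod_eq_of_lt i.isLt]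
    have hpow : (η ^ q ^ (k : ℕ) * δ z) ^ q ^ (j : ℕ) = η ^ q ^ (i : ℕ) * δ z ^ q ^ (j : ℕ) := by
      rw [mul_pow, ← pow_mul, ← pow_add, pow_qpow_mod F n hK η ((k : ℕ) + j), hkj]
    have hkz : k = z ↔ i = j := by
      constructor
      · intro h
        have h0 : ((i : ℕ) + (n - j)) % n = 0 := congrArg Fin.val h
        have hd : n ∣ (i : ℕ) + (n - j) := Nat.dvd_of_mod_eq_zero h0
        obtain ⟨c, hc⟩ := hd
        have hi : (i : ℕ) < n := i.isLt
        have hj : (j : ℕ) < n := j.isLt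
        have hjn : (j : ℕ) ≤ n := le_of_lt hj
        have hub : n * c < n * 2 := by omega
        have hc2 : c < 2 := Nat.lt_of_mul_lt_mul_left hub
        have hcne : c ≠ 0 := by rintro rfl; simp at hc; omega
        have hc1 : c = 1 := by omega
        subst hc1
        have : (i : ℕ) = (j : ℕ) := by omega
        exact Fin.ext this
      · intro h
        subst h
        apply Fin.ext
        show ((i : ℕ) + (n - i)) % n = 0
        have : (i : ℕ) + (n - i) = n := by omega
        rw [this, Nat.mod_self]
    rw [← hpow, hq, trace_pow_card_pow, hδ k z]
    simp [hkz]
  -- conclude via nondegeneracy of the trace form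
  set d : K := δ j - δ z ^ q ^ (j : ℕ) with hd
  have htr : ∀ x : K, Algebra.trace F K (x * d) = 0 := by
    have hgen : ∀ x ∈ Set.range fun i : Fin n => η ^ q ^ (i : ℕ),
        ((Algebra.trace F K).comp (LinearMap.mulRight F d)) x = (0 : K →ₗ[F] F) x := by
      rintro x ⟨i, rfl⟩
      simp only [LinearMap.comp_apply, LinearMap.mulRight_apply, LinearMap.zero_apply]
      rw [hd, mul_sub, map_sub, hδ i j, key i, sub_self]
    have := LinearMap.ext_on hη.2 hgen
    intro x
    have := congrFun (congrArg DFunLike.coe this) x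
    simpa using this
  have hd0 : d = 0 := by
    apply (traceForm_nondegenerate F K).1 d
    intro x
    rw [Algebra.traceForm_apply, mul_comm]
    exact htr x
  have := sub_eq_zero.mp hd0
  exact this
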